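/- Let G be a subgroup of Perm (Fin 5) that acts transitively on Fin 5 and is generated by a set of 5-cycles (elements of cycle type {5}). Then G is conjugate in Perm (Fin 5) to the cyclic group C_5 = ⟨(1 2 3 4 5)⟩ or G equals the alternating group A_5. (This is the group-theoretic content of Theorem 3.10(6): a 5-fold covering of ℙ¹ all of whose branch values are of type [5] has monodromy group C_5 or A_5.) -/

import Mathlib

set_option maxRecDepth 20000


open Equiv

/-- The cyclic subgroup `C₅ = ⟨(1 2 3 4 5)⟩` of `Perm (Fin 5)`. -/
def C5 : Subgroup (Equiv.Perm (Fin 5)) := Subgroup.closure {c[0, 1, 2, 3, 4]}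

/-- `H` is conjugate to `K` in `Perm (Fin 5)`: `σ H σ⁻¹ = K` for some `σ`. -/
def SubConj (H K : Subgroup (Equiv.Perm (Fin 5))) : Prop :=
  ∃ σ : Equiv.Perm (Fin 5), Subgroup.map (MulAut.conj σ).toMonoidHom H = K

/-- A transitive subgroup of `Perm (Fin 5)` generated by a set of 5-cycles is
conjugate to `C₅` or equal to the alternating group `A₅`. -/
theorem transitive_subgroup_generated_by_five_cycles
    (G : Subgroup (Equiv.Perm (Fin 5)))
    (htrans : ∀ x y : Fin 5, ∃ g ∈ G, g x = y)
    (S : Set (Equiv.Perm (Fin 5)))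
    (hS : ∀ σ ∈ S, Equiv.Perm.cycleType σ = {5})
    (hgen : Subgroup.closure S = G) :
    SubConj G C5 ∨ G = alternatingGroup (Fin 5) := by
  classical
  haveI hfact : Fact (Nat.Prime 5) := ⟨by norm_num⟩
  -- every generator is even, so G ≤ A5
  have hSA : S ⊆ ↑(alternatingGroup (Fin 5)) := by
    intro s hs
    have : Equiv.Perm.sign s = 1 := by
      rw [Equiv.Perm.sign_of_cycleType, hS s hs]; decide
    simpa [Equiv.Perm.mem_alternatingGroup] using this
  have hGA : G ≤ alternatingGroup (Fin 5) := by
    rw [← hgen]; exact (Subgroup.closure_le _).mpr hSA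
  -- S is nonempty
  have hSne : S.Nonempty := by
    by_contra h
    rw [Set.not_nonempty_iff_eq_empty] at h
    subst h
    rw [Subgroup.closure_empty] at hgen
    obtain ⟨g, hg, hg01⟩ := htrans 0 1
    rw [← hgen, Subgroup.mem_bot] at hg
    subst hg
    simp at hg01
  obtain ⟨σ0, hσ0S⟩ := hSne
  have hσ0G : σ0 ∈ G := hgen ▸ Subgroup.subset_closure hσ0S
  have hord : ∀ s ∈ S, orderOf s = 5 := by
    intro s hs
    rw [← Equiv.Perm.lcm_cycleType, hS s hs]
    simp
  -- cardinalities
  have hA5card : Nat.card (alternatingGroup (Fin 5)) = 60 := by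
    have h2 := two_mul_card_alternatingGroup (α := Fin 5)
    rw [Fintype.card_perm, Fintype.card_fin] at h2
    have h120 : Nat.factorial 5 = 120 := by decide
    rw [Nat.card_eq_fintype_card]
    omega
  have hGdvd : Nat.card G ∣ 60 := hA5card ▸ Subgroup.card_dvd_of_le hGA
  have h5dvd : 5 ∣ Nat.card G := by
    have : orderOf (⟨σ0, hσ0G⟩ : G) = 5 := by
      rw [← Subgroup.orderOf_coe]; exact hord σ0 hσ0S
    have h := orderOf_dvd_natCard (⟨σ0, hσ0G⟩ : G)
    rwa [this] at h
  have hGpos : 0 < Nat.card G := Nat.card_pos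
  -- Sylow 5-subgroups of G have order 5
  have hfac : (Nat.card G).factorization 5 = 1 := by
    have h1 : 5 ^ 1 ∣ Nat.card G := by simpa using h5dvd
    have h2 : ¬ 5 ^ 2 ∣ Nat.card G := by
      intro h
      have := h.trans hGdvd
      norm_num at this
    have hf1 : 1 ≤ (Nat.card G).factorization 5 :=
      (Nat.Prime.pow_dvd_iff_le_factorization (by norm_num) hGpos.ne').mp h1
    have hf2 : ¬ 2 ≤ (Nat.card G).factorization 5 := fun h =>
      h2 ((Nat.Prime.pow_dvd_iff_le_factorization (by norm_num) hGpos.ne').mpr h)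
    omega
  obtain ⟨P⟩ : Nonempty (Sylow 5 G) := Sylow.nonempty
  have hPcard : Nat.card (P : Subgroup G) = 5 := by
    rw [P.card_eq_multiplicity, hfac, pow_one]
  have hmulPI := Subgroup.card_mul_index (P : Subgroup G)
  rw [hPcard] at hmulPI
  have hPindex : (P : Subgroup G).index ∣ 12 := by
    have h512 : 5 * (P : Subgroup G).index ∣ 5 * 12 := by
      rw [hmulPI]; simpa using hGdvd
    exact (mul_dvd_mul_iff_left (by norm_num : (5:ℕ) ≠ 0)).mp h512
  have hn5 : Nat.card (Sylow 5 G) = 1 ∨ Nat.card (Sylow 5 G) = 6 := by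
    have hdvd : Nat.card (Sylow 5 G) ∣ 12 := (Sylow.card_dvd_index P).trans hPindex
    have h1 : Nat.card (Sylow 5 G) % 5 = 1 % 5 := card_sylow_modEq_one 5 G
    have hle : Nat.card (Sylow 5 G) ≤ 12 := Nat.le_of_dvd (by norm_num) hdvd
    set n5 := Nat.card (Sylow 5 G) with hn5def
    clear_value n5
    interval_cases n5 <;> omega
  rcases hn5 with h | h
  · -- unique Sylow 5-subgroup: G is cyclic of order 5
    left
    haveI hss : Subsingleton (Sylow 5 G) := (Nat.card_eq_one_iff_unique.mp h).1
    have hSP : ∀ s ∈ S, s ∈ Subgroup.map G.subtype (P : Subgroup G) := by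
      intro s hs
      have hsG : s ∈ G := hgen ▸ Subgroup.subset_closure hs
      have hso : orderOf (⟨s, hsG⟩ : G) = 5 := by
        rw [← Subgroup.orderOf_coe]; exact hord s hs
      have hpg : IsPGroup 5 (Subgroup.zpowers (⟨s, hsG⟩ : G)) := by
        apply IsPGroup.of_card
        rw [Nat.card_zpowers, hso, pow_one]
      obtain ⟨Q, hQ⟩ := hpg.exists_le_sylow
      rw [Subsingleton.elim Q P] at hQ
      exact ⟨⟨s, hsG⟩, hQ (Subgroup.mem_zpowers _), rfl⟩
    have hGle : G ≤ Subgroup.map G.subtype (P : Subgroup G) :=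
      hgen.ge.trans ((Subgroup.closure_le _).mpr hSP)
    have hmapcard : Nat.card (Subgroup.map G.subtype (P : Subgroup G)) = 5 := by
      exact ((Nat.card_congr
        (Subgroup.equivMapOfInjective _ _ (Subgroup.subtype_injective G)).toEquiv).symm).trans hPcard
    have hG5 : Nat.card G = 5 := by
      have hle5 := Subgroup.card_le_of_le hGle
      rw [hmapcard] at hle5
      have hge5 : 5 ≤ Nat.card G := Nat.le_of_dvd hGpos h5dvd
      omega
    have hzp : Subgroup.zpowers σ0 = G := by
      apply Subgroup.eq_of_le_of_card_ge (Subgroup.zpowers_le.mpr hσ0G)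
      rw [hG5, Nat.card_zpowers, hord σ0 hσ0S]
    have hconj : IsConj σ0 (c[0, 1, 2, 3, 4] : Perm (Fin 5)) := by
      apply Equiv.Perm.isConj_of_cycleType_eq
      rw [hS σ0 hσ0S]
      decide
    obtain ⟨τ, hτ⟩ := isConj_iff.mp hconj
    refine ⟨τ, ?_⟩
    have hcτ : (MulAut.conj τ).toMonoidHom σ0 = (c[0, 1, 2, 3, 4] : Perm (Fin 5)) := by
      simpa [MulAut.conj_apply] using hτ
    rw [← hzp, MonoidHom.map_zpowers, hcτ, C5, ← Subgroup.zpowers_eq_closure]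
  · -- six Sylow 5-subgroups: |G| = 30 or 60
    have h6 : (6 : ℕ) ∣ (P : Subgroup G).index := h ▸ Sylow.card_dvd_index P
    have hidx : (P : Subgroup G).index = 6 ∨ (P : Subgroup G).index = 12 := by
      have hle : (P : Subgroup G).index ≤ 12 := Nat.le_of_dvd (by norm_num) hPindex
      set i := (P : Subgroup G).index with hidef
      clear_value i
      interval_cases i <;> omega
    have hcard : Nat.card G = 30 ∨ Nat.card G = 60 := by
      rcases hidx with h' | h' <;> rw [h'] at hmulPI <;> omega
    rcases hcard with h30 | h60
    · exfalso
      set H := G.subgroupOf (alternatingGroup (Fin 5)) with hH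
      have hHcard : Nat.card H = 30 := by
        rw [← h30]
        exact Nat.card_congr (Subgroup.subgroupOfEquivOfLe hGA).toEquiv
      have hHidx : H.index = 2 := by
        have hmi := Subgroup.card_mul_index H
        rw [hHcard, hA5card] at hmi
        omega
      have hnormal : H.Normal := by
        constructor
        intro n hn g
        have h1 := Subgroup.mul_mem_iff_of_index_two hHidx (a := g * n) (b := g⁻¹)
        have h2 := Subgroup.mul_mem_iff_of_index_two hHidx (a := g) (b := n)
        rw [h1, h2]
        simp [hn]
      rcases hnormal.eq_bot_or_eq_top with hb | ht
      · rw [hb, Subgroup.card_bot] at hHcard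
        omega
      · rw [ht, Subgroup.card_top] at hHcard
        omega
    · right
      exact Subgroup.eq_of_le_of_card_ge hGA (le_of_eq (by rw [hA5card, h60]))
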